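/- There exists a constant C > 0 such that for every n and every X ∈ ℝ^{n×n} with ‖X‖_F ≤ 1/2, the positive-definite square root of (Id + X)(Id + X)ᵀ satisfies ‖((Id + X)(Id + X)ᵀ)^{1/2} − Id − (1/2)(X + Xᵀ)‖_F ≤ C ‖X‖_F². -/

import Mathlib

open scoped BigOperators
open Matrix

/-- Frobenius norm of a real matrix. -/
noncomputable def frobNorm {m n : ℕ} (A : Matrix (Fin m) (Fin n) ℝ) : ℝ :=
  Real.sqrt (∑ i, ∑ j, (A i j) ^ 2)

/-- Spectral (largest singular value / ℓ2-operator) norm of a real matrix. -/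
noncomputable def specNorm {m n : ℕ} (A : Matrix (Fin m) (Fin n) ℝ) : ℝ :=
  ‖LinearMap.toContinuousLinearMap (Matrix.toEuclideanLin A)‖

/-- Euclidean (ℓ2) norm of a vector. -/
noncomputable def vecNorm {n : ℕ} (v : Fin n → ℝ) : ℝ :=
  Real.sqrt (∑ i, v i ^ 2)

/-- β(z): the smallest nonzero magnitude among the entries of `z`
(defined as `sInf` of the set of nonzero magnitudes; `0` if `z = 0`). -/
noncomputable def beta {n : ℕ} (z : Fin n → ℝ) : ℝ :=
  sInf {r : ℝ | ∃ i, z i ≠ 0 ∧ r = |z i|}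

/-- `z` is an output of the hard-thresholding operator `H_s` applied to `y`:
there is a set `T` of `min s n` indices carrying largest-magnitude entries of `y`,
such that `z` agrees with `y` on `T` and vanishes off `T`. -/
def IsHardThreshold {n : ℕ} (s : ℕ) (y z : Fin n → ℝ) : Prop :=
  ∃ T : Finset (Fin n), T.card = min s n ∧ (∀ i ∈ T, z i = y i) ∧ (∀ i ∉ T, z i = 0) ∧
    ∀ i ∈ T, ∀ j ∉ T, |y j| ≤ |y i|

/-- `A = U * S * Vᵀ` is a full singular value decomposition of `A`:
`U, V` orthogonal and `S` diagonal with nonnegative entries. -/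
def IsFullSVD {n : ℕ} (A U S V : Matrix (Fin n) (Fin n) ℝ) : Prop :=
  Uᵀ * U = 1 ∧ Vᵀ * V = 1 ∧ (∀ i j, i ≠ j → S i j = 0) ∧ (∀ i, 0 ≤ S i i) ∧ A = U * S * Vᵀ

/-- `W = V * Uᵀ` for some full SVD `A = U * S * Vᵀ`. -/
def IsPolarFromSVD {n : ℕ} (A W : Matrix (Fin n) (Fin n) ℝ) : Prop :=
  ∃ U S V, IsFullSVD A U S V ∧ W = V * Uᵀ

/-- `D_k`: the n×n diagonal matrix of ones with a zero at entry (k,k). -/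
noncomputable def Dmat {n : ℕ} (k : Fin n) : Matrix (Fin n) (Fin n) ℝ :=
  Matrix.diagonal (fun i => if i = k then 0 else 1)

-- `D̃_k`: the N×N diagonal matrix with ones at the support of the k-th row of `Zs`.
open Classical in
noncomputable def Dtil {n N : ℕ} (Zs : Matrix (Fin n) (Fin N) ℝ) (k : Fin n) :
    Matrix (Fin N) (Fin N) ℝ :=
  Matrix.diagonal (fun i => if Zs k i ≠ 0 then 1 else 0)

/-- `q = max_{1 ≤ k ≤ n} ‖D_k Z* D̃_k‖₂`. -/
noncomputable def qZero {n N : ℕ} (Zs : Matrix (Fin n) (Fin N) ℝ) : ℝ :=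
  ⨆ k, specNorm (Dmat k * Zs * Dtil Zs k)

/-- Smallest singular value of an n×N matrix: `min_{‖x‖=1, x ∈ ℝⁿ} ‖Aᵀ x‖`. -/
noncomputable def sigmaMin {n N : ℕ} (A : Matrix (Fin n) (Fin N) ℝ) : ℝ :=
  sInf {r : ℝ | ∃ x : EuclideanSpace ℝ (Fin n), ‖x‖ = 1 ∧ r = ‖Matrix.toEuclideanLin Aᵀ x‖}

/-- Condition number κ(A): ratio of largest to smallest singular value. -/
noncomputable def condNumber {n N : ℕ} (A : Matrix (Fin n) (Fin N) ℝ) : ℝ :=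
  specNorm A / sigmaMin A

/-- `q = κ⁴(Z*) · max_{1 ≤ k ≤ n} ‖D_k Z* Z*ᵀ Z* D̃_k‖₂`. -/
noncomputable def qGen {n N : ℕ} (Zs : Matrix (Fin n) (Fin N) ℝ) : ℝ :=
  condNumber Zs ^ 4 * ⨆ k, specNorm (Dmat k * Zs * Zsᵀ * Zs * Dtil Zs k)

section helpers

attribute [local instance] Matrix.frobeniusSeminormedAddCommGroup Matrix.frobeniusNormedRing
  Matrix.frobeniusNormedSpace

lemma frobNorm_eq_norm {m n : ℕ} (A : Matrix (Fin m) (Fin n) ℝ) : frobNorm A = ‖A‖ := by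
  rw [frobNorm, Matrix.frobenius_norm_def, Real.sqrt_eq_rpow]
  congr 1
  refine Finset.sum_congr rfl fun i _ => Finset.sum_congr rfl fun j _ => ?_
  rw [show (2:ℝ) = ((2:ℕ):ℝ) by norm_num, Real.rpow_natCast, Real.norm_eq_abs, sq_abs]

lemma frobNorm_nonneg {m n : ℕ} (A : Matrix (Fin m) (Fin n) ℝ) : 0 ≤ frobNorm A := by
  rw [frobNorm_eq_norm]; exact norm_nonneg _

lemma frobNorm_mul_le {n : ℕ} (A B : Matrix (Fin n) (Fin n) ℝ) :
    frobNorm (A * B) ≤ frobNorm A * frobNorm B := by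
  simp only [frobNorm_eq_norm]; exact Matrix.frobenius_norm_mul A B

lemma frobNorm_transpose {n : ℕ} (A : Matrix (Fin n) (Fin n) ℝ) : frobNorm Aᵀ = frobNorm A := by
  simp only [frobNorm_eq_norm]; exact Matrix.frobenius_norm_transpose A

lemma frobNorm_add_le {m n : ℕ} (A B : Matrix (Fin m) (Fin n) ℝ) :
    frobNorm (A + B) ≤ frobNorm A + frobNorm B := by
  simp only [frobNorm_eq_norm]; exact norm_add_le A B

lemma frobNorm_sub_le {m n : ℕ} (A B : Matrix (Fin m) (Fin n) ℝ) :
    frobNorm (A - B) ≤ frobNorm A + frobNorm B := by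
  simp only [frobNorm_eq_norm]; exact norm_sub_le A B

lemma frobNorm_smul {m n : ℕ} (c : ℝ) (A : Matrix (Fin m) (Fin n) ℝ) :
    frobNorm (c • A) = |c| * frobNorm A := by
  simp only [frobNorm_eq_norm]
  rw [norm_smul, Real.norm_eq_abs]

end helpers

lemma frobSq_eq_trace {n : ℕ} (A : Matrix (Fin n) (Fin n) ℝ) :
    ∑ i, ∑ j, A i j ^ 2 = (Aᵀ * A).trace := by
  simp only [Matrix.trace, Matrix.diag, Matrix.mul_apply, Matrix.transpose_apply, sq]
  rw [Finset.sum_comm]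

lemma frobNorm_mul_left {n : ℕ} (U A : Matrix (Fin n) (Fin n) ℝ) (hU : Uᵀ * U = 1) :
    frobNorm (U * A) = frobNorm A := by
  unfold frobNorm
  congr 1
  rw [frobSq_eq_trace, frobSq_eq_trace, Matrix.transpose_mul]
  have : Aᵀ * Uᵀ * (U * A) = Aᵀ * A := by
    rw [mul_assoc, ← mul_assoc Uᵀ U A, hU, one_mul]
  rw [this]

lemma frobNorm_mul_right {n : ℕ} (A V : Matrix (Fin n) (Fin n) ℝ) (hV : V * Vᵀ = 1) :
    frobNorm (A * V) = frobNorm A := by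
  unfold frobNorm
  congr 1
  rw [frobSq_eq_trace, frobSq_eq_trace, Matrix.transpose_mul]
  rw [show Vᵀ * Aᵀ * (A * V) = Vᵀ * (Aᵀ * A * V) by noncomm_ring, Matrix.trace_mul_comm,
    mul_assoc, hV, mul_one]

lemma quad_form_le {n : ℕ} (A : Matrix (Fin n) (Fin n) ℝ) (v : Fin n → ℝ)
    (hv : ∑ i, v i ^ 2 = 1) : |v ⬝ᵥ (A *ᵥ v)| ≤ frobNorm A := by
  have h1 : v ⬝ᵥ (A *ᵥ v) = ∑ p : Fin n × Fin n, (v p.1 * v p.2) * A p.1 p.2 := by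
    rw [Fintype.sum_prod_type]
    simp only [dotProduct, Matrix.mulVec, dotProduct]
    exact Finset.sum_congr rfl fun i _ => by
      rw [Finset.mul_sum]; exact Finset.sum_congr rfl fun j _ => by ring
  have h2 : (∑ p : Fin n × Fin n, (v p.1 * v p.2) * A p.1 p.2) ^ 2 ≤
      (∑ p : Fin n × Fin n, (v p.1 * v p.2) ^ 2) * (∑ p : Fin n × Fin n, A p.1 p.2 ^ 2) :=
    Finset.sum_mul_sq_le_sq_mul_sq _ _ _
  have h3 : (∑ p : Fin n × Fin n, (v p.1 * v p.2) ^ 2) = 1 := by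
    rw [Fintype.sum_prod_type]
    have : ∀ i : Fin n, ∑ j, (v i * v j) ^ 2 = v i ^ 2 * ∑ j, v j ^ 2 := by
      intro i; rw [Finset.mul_sum]; exact Finset.sum_congr rfl fun j _ => by ring
    simp only [this, hv, mul_one]
  have h4 : (∑ p : Fin n × Fin n, A p.1 p.2 ^ 2) = ∑ i, ∑ j, A i j ^ 2 := by
    rw [Fintype.sum_prod_type]
  calc |v ⬝ᵥ (A *ᵥ v)| = Real.sqrt ((v ⬝ᵥ (A *ᵥ v)) ^ 2) := (Real.sqrt_sq_eq_abs _).symm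
    _ ≤ Real.sqrt (∑ i, ∑ j, A i j ^ 2) := by
        apply Real.sqrt_le_sqrt
        rw [h1]
        calc (∑ p : Fin n × Fin n, (v p.1 * v p.2) * A p.1 p.2) ^ 2 ≤ _ := h2
          _ = ∑ i, ∑ j, A i j ^ 2 := by rw [h3, one_mul, h4]
    _ = frobNorm A := rfl

lemma spectral' {n : ℕ} (A : Matrix (Fin n) (Fin n) ℝ) (hA : A.IsHermitian) :
    ∃ U : Matrix (Fin n) (Fin n) ℝ, ∃ d : Fin n → ℝ,
      Uᵀ * U = 1 ∧ A = U * Matrix.diagonal d * Uᵀ := by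
  refine ⟨hA.eigenvectorUnitary, hA.eigenvalues, ?_, ?_⟩
  · have := (Matrix.mem_unitaryGroup_iff'.mp hA.eigenvectorUnitary.2)
    rw [← Matrix.conjTranspose_eq_transpose_of_trivial]
    exact this
  · have h := hA.spectral_theorem
    simpa [Matrix.star_eq_conjTranspose, Matrix.conjTranspose_eq_transpose_of_trivial] using h

lemma diag_entry_quad {n : ℕ} (M U : Matrix (Fin n) (Fin n) ℝ) (i : Fin n) :
    (Uᵀ * M * U) i i = (fun k => U k i) ⬝ᵥ (M *ᵥ fun k => U k i) := by
  simp only [Matrix.mul_apply, Matrix.transpose_apply, dotProduct, Matrix.mulVec,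
    Finset.sum_mul, Finset.mul_sum]
  rw [Finset.sum_comm]
  exact Finset.sum_congr rfl fun k _ => Finset.sum_congr rfl fun j _ => by ring

/-- first-order Taylor expansion of the positive-definite square root
`((Id + X)(Id + X)ᵀ)^{1/2} ≈ Id + (1/2)(X + Xᵀ)`, with a uniform constant. -/
theorem stmt9 :
    ∃ C : ℝ, 0 < C ∧ ∀ (n : ℕ) (X : Matrix (Fin n) (Fin n) ℝ),
      frobNorm X ≤ 1/2 →
      ∀ S : Matrix (Fin n) (Fin n) ℝ, S.PosSemidef →
        S * S = (1 + X) * (1 + X)ᵀ →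
        frobNorm (S - 1 - (1/2 : ℝ) • (X + Xᵀ)) ≤ C * frobNorm X ^ 2 := by
  refine ⟨4, by norm_num, fun n X hX S hs hSS => ?_⟩
  set E : Matrix (Fin n) (Fin n) ℝ := X + Xᵀ with hE
  set B : Matrix (Fin n) (Fin n) ℝ := 1 + (1/2 : ℝ) • E with hBdef
  set T : Matrix (Fin n) (Fin n) ℝ := S - B with hTdef
  set R : Matrix (Fin n) (Fin n) ℝ := X * Xᵀ - (1/4 : ℝ) • (E * E) with hRdef
  have hf0 : 0 ≤ frobNorm X := frobNorm_nonneg X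
  -- frobNorm of E/2
  have hEbound : frobNorm ((1/2 : ℝ) • E) ≤ frobNorm X := by
    rw [frobNorm_smul]
    have := frobNorm_add_le X Xᵀ
    rw [frobNorm_transpose] at this
    rw [hE]
    rw [abs_of_nonneg (by norm_num : (0:ℝ) ≤ 1/2)]
    linarith
  -- B is symmetric
  have hBsymm : Bᵀ = B := by
    rw [hBdef, hE]
    simp [Matrix.transpose_add, Matrix.transpose_smul, Matrix.transpose_one,
      Matrix.transpose_transpose]
    module
  have hB : B.IsHermitian := by
    show Bᴴ = B
    rw [Matrix.conjTranspose_eq_transpose_of_trivial, hBsymm]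
  -- the key algebraic identity
  have key : S * T + T * B = R := by
    have e1 : S * T + T * B = S * S - B * B := by rw [hTdef]; noncomm_ring
    rw [e1, hSS, hRdef, hBdef, hE]
    simp only [Matrix.transpose_add, Matrix.transpose_one, Matrix.add_mul, Matrix.mul_add,
      Matrix.smul_mul, Matrix.mul_smul, Matrix.mul_one, Matrix.one_mul, smul_add, smul_smul]
    module
  -- spectral decompositions
  obtain ⟨U, lam, hU, hSdec⟩ := spectral' S hs.1
  obtain ⟨V, mu, hV, hBdec⟩ := spectral' B hB
  have hU' : U * Uᵀ = 1 := mul_eq_one_comm.mp hU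
  have hV' : V * Vᵀ = 1 := mul_eq_one_comm.mp hV
  have hdiagS : Uᵀ * S * U = Matrix.diagonal lam := by
    rw [hSdec, show Uᵀ * (U * Matrix.diagonal lam * Uᵀ) * U
        = (Uᵀ * U) * Matrix.diagonal lam * (Uᵀ * U) by noncomm_ring, hU, one_mul, mul_one]
  have hdiagB : Vᵀ * B * V = Matrix.diagonal mu := by
    rw [hBdec, show Vᵀ * (V * Matrix.diagonal mu * Vᵀ) * V
        = (Vᵀ * V) * Matrix.diagonal mu * (Vᵀ * V) by noncomm_ring, hV, one_mul, mul_one]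
  -- eigenvalues of S are nonnegative
  have hlam : ∀ i, 0 ≤ lam i := by
    intro i
    have h := hs.dotProduct_mulVec_nonneg (fun k => U k i)
    rw [star_trivial] at h
    rw [← diag_entry_quad S U i, hdiagS, Matrix.diagonal_apply_eq] at h
    exact h
  -- eigenvalues of B are at least 1/2
  have hmu : ∀ j, (1/2 : ℝ) ≤ mu j := by
    intro j
    have hcol : ∑ k, V k j ^ 2 = 1 := by
      have h : (Vᵀ * V) j j = (1 : Matrix (Fin n) (Fin n) ℝ) j j := by rw [hV]
      simpa [Matrix.mul_apply, Matrix.transpose_apply, sq] using h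
    have hq := quad_form_le ((1/2 : ℝ) • E) (fun k => V k j) hcol
    have hmuval : mu j = 1 + (fun k => V k j) ⬝ᵥ (((1/2 : ℝ) • E) *ᵥ fun k => V k j) := by
      have h1 : mu j = (Vᵀ * B * V) j j := by rw [hdiagB, Matrix.diagonal_apply_eq]
      rw [h1, diag_entry_quad, hBdef, Matrix.add_mulVec, Matrix.one_mulVec, dotProduct_add]
      congr 1
      simpa [dotProduct, sq] using hcol
    have hb : |(fun k => V k j) ⬝ᵥ (((1/2 : ℝ) • E) *ᵥ fun k => V k j)| ≤ 1/2 := by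
      calc _ ≤ frobNorm ((1/2 : ℝ) • E) := hq
        _ ≤ frobNorm X := hEbound
        _ ≤ 1/2 := hX
    rw [hmuval]
    have := abs_le.mp hb
    linarith [this.1]
  -- transformed equation
  set Tt : Matrix (Fin n) (Fin n) ℝ := Uᵀ * T * V with hTt
  set Rt : Matrix (Fin n) (Fin n) ℝ := Uᵀ * R * V with hRt
  have key2 : Matrix.diagonal lam * Tt + Tt * Matrix.diagonal mu = Rt := by
    have a1 : Matrix.diagonal lam * Tt = Uᵀ * (S * T) * V := by
      rw [← hdiagS, hTt, show Uᵀ * S * U * (Uᵀ * T * V) = Uᵀ * S * (U * Uᵀ) * (T * V)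
        by noncomm_ring, hU', mul_one]
      noncomm_ring
    have a2 : Tt * Matrix.diagonal mu = Uᵀ * (T * B) * V := by
      rw [← hdiagB, hTt, show Uᵀ * T * V * (Vᵀ * B * V) = Uᵀ * T * (V * Vᵀ) * (B * V)
        by noncomm_ring, hV', mul_one]
      noncomm_ring
    rw [a1, a2, hRt, ← key]
    noncomm_ring
  -- entrywise bound
  have hentry : ∀ i j, (lam i + mu j) * Tt i j = Rt i j := by
    intro i j
    have h : (Matrix.diagonal lam * Tt + Tt * Matrix.diagonal mu) i j = Rt i j := by rw [key2]
    rw [Matrix.add_apply, Matrix.diagonal_mul, Matrix.mul_diagonal] at h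
    linarith [h]
  have hsq : ∀ i j, Tt i j ^ 2 ≤ 4 * Rt i j ^ 2 := by
    intro i j
    have hc : (1/2 : ℝ) ≤ lam i + mu j := by linarith [hlam i, hmu j]
    have hr : Rt i j ^ 2 = (lam i + mu j) ^ 2 * Tt i j ^ 2 := by
      rw [← hentry i j]; ring
    nlinarith [mul_nonneg (mul_nonneg (by linarith : (0:ℝ) ≤ 2 * (lam i + mu j) - 1)
      (by linarith : (0:ℝ) ≤ 2 * (lam i + mu j) + 1)) (sq_nonneg (Tt i j))]
  have hsum : frobNorm Tt ≤ 2 * frobNorm Rt := by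
    rw [frobNorm, frobNorm]
    have h1 : ∑ i, ∑ j, Tt i j ^ 2 ≤ 4 * ∑ i, ∑ j, Rt i j ^ 2 := by
      rw [Finset.mul_sum]
      refine Finset.sum_le_sum fun i _ => ?_
      rw [Finset.mul_sum]
      exact Finset.sum_le_sum fun j _ => hsq i j
    calc Real.sqrt (∑ i, ∑ j, Tt i j ^ 2) ≤ Real.sqrt (4 * ∑ i, ∑ j, Rt i j ^ 2) :=
          Real.sqrt_le_sqrt h1
      _ = 2 * Real.sqrt (∑ i, ∑ j, Rt i j ^ 2) := by
          rw [Real.sqrt_mul (by norm_num : (0:ℝ) ≤ 4),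
            show (4:ℝ) = 2 ^ 2 by norm_num, Real.sqrt_sq (by norm_num : (0:ℝ) ≤ 2)]
  -- invariance
  have hTinv : frobNorm Tt = frobNorm T := by
    rw [hTt, mul_assoc, frobNorm_mul_left _ _ (by rw [Matrix.transpose_transpose]; exact hU'),
      frobNorm_mul_right _ _ hV']
  have hRinv : frobNorm Rt = frobNorm R := by
    rw [hRt, mul_assoc, frobNorm_mul_left _ _ (by rw [Matrix.transpose_transpose]; exact hU'),
      frobNorm_mul_right _ _ hV']
  -- bound on R
  have hRbound : frobNorm R ≤ 2 * frobNorm X ^ 2 := by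
    have h1 : frobNorm (X * Xᵀ) ≤ frobNorm X ^ 2 := by
      calc frobNorm (X * Xᵀ) ≤ frobNorm X * frobNorm Xᵀ := frobNorm_mul_le _ _
        _ = frobNorm X ^ 2 := by rw [frobNorm_transpose]; ring
    have h2 : frobNorm ((1/4 : ℝ) • (E * E)) ≤ frobNorm X ^ 2 := by
      rw [frobNorm_smul, abs_of_nonneg (by norm_num : (0:ℝ) ≤ 1/4)]
      have hE2 : frobNorm E ≤ 2 * frobNorm X := by
        have := frobNorm_add_le X Xᵀ
        rw [frobNorm_transpose] at this
        rw [hE]; linarith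
      have := frobNorm_mul_le E E
      nlinarith [frobNorm_nonneg E, frobNorm_nonneg (E * E)]
    calc frobNorm R ≤ frobNorm (X * Xᵀ) + frobNorm ((1/4 : ℝ) • (E * E)) := by
          rw [hRdef]; exact frobNorm_sub_le _ _
      _ ≤ 2 * frobNorm X ^ 2 := by linarith
  -- conclusion
  have hgoal : S - 1 - (1/2 : ℝ) • (X + Xᵀ) = T := by
    rw [hTdef, hBdef, hE]; abel
  rw [hgoal, ← hTinv]
  calc frobNorm Tt ≤ 2 * frobNorm Rt := hsum
    _ = 2 * frobNorm R := by rw [hRinv]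
    _ ≤ 4 * frobNorm X ^ 2 := by linarith
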